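/- arXiv:2008.03279 — 4 statements merged into one kernel-verified Lean document; each statement's English description precedes it below -/
import Mathlib

section
/- Let R and S be finite digraphs. If #S(G,R) ≤ #S(G,S) for every finite digraph G, then #H(G,R) ≤ #H(G,S) for every finite digraph G. -/
/-- A homomorphism between digraphs `(V, A)` and `(W, B)`:
a map sending every arc to an arc. -/
def IsHom {V W : Type} (A : V → V → Prop) (B : W → W → Prop) (f : V → W) : Prop :=
  ∀ ⦃v w : V⦄, A v w → B (f v) (f w)

/-- A strict homomorphism: a homomorphism mapping proper arcs to proper arcs. -/
def IsStrictHom {V W : Type} (A : V → V → Prop) (B : W → W → Prop) (f : V → W) : Prop :=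
  IsHom A B f ∧ ∀ ⦃v w : V⦄, A v w → v ≠ w → f v ≠ f w

/-- Adjacency in a digraph. -/
def DAdj {V : Type} (A : V → V → Prop) (v w : V) : Prop := A v w ∨ A w v

/-- `v` and `w` are connected in `X`: `v = w` (with `v ∈ X`), or there is a line
`z 0, …, z I` inside `X` connecting them, consecutive members being adjacent. -/
def ConnIn {V : Type} (A : V → V → Prop) (X : Set V) (v w : V) : Prop :=
  ∃ (I : ℕ) (z : ℕ → V), z 0 = v ∧ z I = w ∧ (∀ i ≤ I, z i ∈ X) ∧
    ∀ i < I, DAdj A (z i) (z (i + 1))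

/-- `γ_X(v)`: the set of `w ∈ X` connected with `v` in `X`. -/
def gammaSet {V : Type} (A : V → V → Prop) (X : Set V) (v : V) : Set V :=
  {w | ConnIn A X v w}

/-- `Γ_ξ(v)`: the connectivity component of `v` in the preimage `ξ⁻¹(ξ(v))`. -/
def GammaComp {V W : Type} (A : V → V → Prop) (ξ : V → W) (v : V) : Set V :=
  gammaSet A {u | ξ u = ξ v} v

/-- The set of homomorphisms `H(G,H)` (as a type). -/
def HomSet {V W : Type} (A : V → V → Prop) (B : W → W → Prop) : Type :=
  {f : V → W // IsHom A B f}

/-- The set of strict homomorphisms `S(G,H)` (as a type). -/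
def StrictHomSet {V W : Type} (A : V → V → Prop) (B : W → W → Prop) : Type :=
  {f : V → W // IsStrictHom A B f}

/-- The vertex set of the digraph `G_ξ`: the components `Γ_ξ(v)`, `v ∈ V(G)`. -/
def GVert {V W : Type} (A : V → V → Prop) (ξ : V → W) : Type :=
  {C : Set V // ∃ v, C = GammaComp A ξ v}

/-- The arc relation of the digraph `G_ξ`. -/
def GArc {V W : Type} (A : V → V → Prop) (ξ : V → W) :
    GVert A ξ → GVert A ξ → Prop :=
  fun C D => ∃ a ∈ C.1, ∃ b ∈ D.1, A a b

/-- The canonical map `π_ξ : G → G_ξ`, `v ↦ Γ_ξ(v)`. -/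
def piMap {V W : Type} (A : V → V → Prop) (ξ : V → W) (v : V) : GVert A ξ :=
  ⟨GammaComp A ξ v, v, rfl⟩

/-- `Θ_{G,H'}(ξ)`: the homomorphisms `ζ : G → H'` with `G_ζ = G_ξ`
(equality of the digraphs `G_ζ` and `G_ξ`, i.e. of their vertex sets,
which determines the arc sets). -/
def ThetaSet {V W W' : Type} (A : V → V → Prop) (B' : W' → W' → Prop)
    (ξ : V → W) : Set (V → W') :=
  {ζ | IsHom A B' ζ ∧
    {C : Set V | ∃ v, C = GammaComp A ζ v} = {C : Set V | ∃ v, C = GammaComp A ξ v}}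

/-- `R ⊑_Γ S` with respect to a class `D'` of finite digraphs: a strong Γ-scheme
from `R` to `S` exists, i.e. for every finite digraph `G ∈ D'` an injective map
`ρ_G : H(G,R) → H(G,S)` with `Γ_{ρ_G(ξ)}(v) = Γ_ξ(v)` for all `ξ`, `v`. -/
def SqGamma (D' : (V : Type) → (V → V → Prop) → Prop)
    {VR VS : Type} (R : VR → VR → Prop) (S : VS → VS → Prop) : Prop :=
  ∀ (V : Type) [Finite V] [Nonempty V] (A : V → V → Prop), D' V A →
    ∃ ρ : HomSet A R → HomSet A S, Function.Injective ρ ∧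
      ∀ (ξ : HomSet A R) (v : V), GammaComp A (ρ ξ).1 v = GammaComp A ξ.1 v

/-- The class `T_a`: digraphs whose loop-removed digraph is acyclic,
i.e. every closed walk is trivial. -/
def Ta {V : Type} (A : V → V → Prop) : Prop :=
  ∀ (z : ℕ → V) (I : ℕ), 0 < I →
    (∀ i < I, A (z i) (z (i + 1)) ∧ z i ≠ z (i + 1)) → z 0 ≠ z I

/-- A poset: a reflexive, antisymmetric, transitive digraph. -/
def IsPosetRel {V : Type} (A : V → V → Prop) : Prop :=
  Reflexive A ∧ AntiSymmetric A ∧ Transitive A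

/-- An element of `P^*`: an irreflexive, antisymmetric, transitive digraph. -/
def IsStrictPosetRel {V : Type} (A : V → V → Prop) : Prop :=
  Irreflexive A ∧ AntiSymmetric A ∧ Transitive A

/-- The direct (disjoint) sum of two digraphs. -/
def sumRel {V W : Type} (A : V → V → Prop) (B : W → W → Prop) :
    V ⊕ W → V ⊕ W → Prop
  | Sum.inl v, Sum.inl w => A v w
  | Sum.inr v, Sum.inr w => B v w
  | _, _ => False

/-- The open neighborhood `N(v)`. -/
def Nbr {Z : Type} (A : Z → Z → Prop) (v : Z) : Set Z :=
  {w | w ≠ v ∧ (A v w ∨ A w v)}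

/-- The in-neighborhood `N^in(v)`. -/
def NIn {Z : Type} (A : Z → Z → Prop) (v : Z) : Set Z :=
  {w | w ≠ v ∧ A w v}

/-- The out-neighborhood `N^out(v)`. -/
def NOut {Z : Type} (A : Z → Z → Prop) (v : Z) : Set Z :=
  {w | w ≠ v ∧ A v w}

/-- `A_r`: the arcs of `R` minus all arcs between `M` and `X`. -/
def ArRel {Z : Type} (A : Z → Z → Prop) (X M : Set Z) : Z → Z → Prop :=
  fun v w => A v w ∧ ¬(v ∈ M ∧ w ∈ X) ∧ ¬(v ∈ X ∧ w ∈ M)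

/-- `A_d = { m β(x) : m x ∈ A(R) ∩ (M × X) }`. -/
def AdRel {Z : Type} (A : Z → Z → Prop) (X M : Set Z) (β : Z → Z) : Z → Z → Prop :=
  fun v w => v ∈ M ∧ ∃ x ∈ X, A v x ∧ w = β x

/-- `A_u = { β(x) m : x m ∈ A(R) ∩ (X × M) }`. -/
def AuRel {Z : Type} (A : Z → Z → Prop) (X M : Set Z) (β : Z → Z) : Z → Z → Prop :=
  fun v w => w ∈ M ∧ ∃ x ∈ X, A x w ∧ v = β x

/-- The rearranged digraph `S`, with `A(S) = A_r ∪ A_d ∪ A_u`. -/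
def SRel {Z : Type} (A : Z → Z → Prop) (X M : Set Z) (β : Z → Z) : Z → Z → Prop :=
  fun v w => ArRel A X M v w ∨ AdRel A X M β v w ∨ AuRel A X M β v w

/-- `U_ξ = { v : ξ(v) ∈ T and ξ[N_G(v)] ∩ M ≠ ∅ }` (for `T = X`; with `T = Y`
this gives `U'_ζ`). -/
def USet {V Z : Type} (AG : V → V → Prop) (T M : Set Z) (ξ : V → Z) : Set V :=
  {v | ξ v ∈ T ∧ ∃ w ∈ Nbr AG v, ξ w ∈ M}

open Classical in
/-- The rearranged homomorphism `ρ_G(ξ)`: `β(ξ(v))` on `U_ξ` and `ξ(v)` elsewhere. -/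
noncomputable def rhoMap {V Z : Type} (AG : V → V → Prop) (X M : Set Z) (β : Z → Z)
    (ξ : V → Z) : V → Z :=
  fun v => if v ∈ USet AG X M ξ then β (ξ v) else ξ v

section AuxProof

variable {V W W' : Type}

lemma connIn_mem_right {A : V → V → Prop} {X : Set V} {v w : V}
    (h : ConnIn A X v w) : w ∈ X := by
  obtain ⟨I, z, h0, hI, hm, _⟩ := h
  have := hm I le_rfl
  rwa [hI] at this

lemma connIn_refl {A : V → V → Prop} {X : Set V} {v : V} (hv : v ∈ X) :
    ConnIn A X v v :=
  ⟨0, fun _ => v, rfl, rfl, fun _ _ => hv, fun i hi => absurd hi (Nat.not_lt_zero i)⟩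

lemma dAdj_symm {A : V → V → Prop} {a b : V} (h : DAdj A a b) : DAdj A b a :=
  h.symm

lemma connIn_symm {A : V → V → Prop} {X : Set V} {v w : V}
    (h : ConnIn A X v w) : ConnIn A X w v := by
  obtain ⟨I, z, h0, hI, hm, hadj⟩ := h
  refine ⟨I, fun j => z (I - j), by simp [hI], by simp [h0], fun i hi => hm _ (by omega), ?_⟩
  intro j hj
  have hk : j < I := hj
  have := hadj (I - (j + 1)) (by omega)
  have e1 : I - (j + 1) + 1 = I - j := by omega
  rw [e1] at this
  exact dAdj_symm this

lemma connIn_trans {A : V → V → Prop} {X : Set V} {u v w : V}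
    (h1 : ConnIn A X u v) (h2 : ConnIn A X v w) : ConnIn A X u w := by
  obtain ⟨I, z, hz0, hzI, hzm, hza⟩ := h1
  obtain ⟨J, y, hy0, hyJ, hym, hya⟩ := h2
  refine ⟨I + J, fun i => if i ≤ I then z i else y (i - I), by simp [hz0], ?_, ?_, ?_⟩
  · by_cases hJ : I + J ≤ I
    · have : J = 0 := by omega
      simp only [if_pos hJ]
      have : I + J = I := by omega
      rw [this, hzI, ← hy0]
      subst ‹J = 0›
      rw [← hyJ]
    · simp only [if_neg hJ]
      have : I + J - I = J := by omega
      rw [this, hyJ]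
  · intro i hi
    by_cases h : i ≤ I
    · simpa [h] using hzm i h
    · simp only [if_neg h]
      exact hym (i - I) (by omega)
  · intro i hi
    have key : ∀ k, I ≤ k → (if k ≤ I then z k else y (k - I)) = y (k - I) := by
      intro k hk
      by_cases h : k ≤ I
      · have : k = I := le_antisymm h hk
        subst this
        simp [hzI, ← hy0]
      · simp [h]
    by_cases h : i < I
    · have h1 : i ≤ I := le_of_lt h
      have h2 : i + 1 ≤ I := h
      simpa [h1, h2] using hza i h
    · have hIi : I ≤ i := le_of_not_gt h
      show DAdj A (if i ≤ I then z i else y (i - I)) (if i + 1 ≤ I then z (i + 1) else y (i + 1 - I))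
      rw [key i hIi, key (i + 1) (by omega)]
      have e : i + 1 - I = i - I + 1 := by omega
      rw [e]
      exact hya (i - I) (by omega)

lemma mem_gammaComp_self {A : V → V → Prop} (ξ : V → W) (v : V) :
    v ∈ GammaComp A ξ v :=
  connIn_refl rfl

lemma gammaComp_apply_eq {A : V → V → Prop} {ξ : V → W} {v w : V}
    (h : w ∈ GammaComp A ξ v) : ξ w = ξ v :=
  connIn_mem_right (X := {u | ξ u = ξ v}) h

lemma gammaComp_eq_of_mem {A : V → V → Prop} {ξ : V → W} {v w : V}
    (h : w ∈ GammaComp A ξ v) : GammaComp A ξ v = GammaComp A ξ w := by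
  have hx : {u | ξ u = ξ w} = {u | ξ u = ξ v} := by
    ext u; simp [gammaComp_apply_eq h]
  unfold GammaComp
  rw [hx]
  unfold gammaSet
  ext u
  constructor
  · intro hu
    exact connIn_trans (connIn_symm h) hu
  · intro hu
    exact connIn_trans h hu

lemma piMap_eq_iff {A : V → V → Prop} {ξ : V → W} {v w : V} :
    piMap A ξ v = piMap A ξ w ↔ w ∈ GammaComp A ξ v := by
  constructor
  · intro h
    have : GammaComp A ξ v = GammaComp A ξ w := congrArg Subtype.val h
    rw [this]
    exact mem_gammaComp_self ξ w
  · intro h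
    exact Subtype.ext (gammaComp_eq_of_mem h)

lemma mem_piMap {A : V → V → Prop} (ξ : V → W) (v : V) : v ∈ (piMap A ξ v).1 :=
  mem_gammaComp_self ξ v

lemma connIn_step {A : V → V → Prop} {ζ : V → W'} {a b : V}
    (hab : DAdj A a b) (hz : ζ a = ζ b) : b ∈ GammaComp A ζ a := by
  refine ⟨1, fun i => if i = 0 then a else b, by simp, by simp, ?_, ?_⟩
  · intro i hi
    by_cases h : i = 0
    · simp [h]
    · simp only [if_neg h]
      exact hz.symm
  · intro i hi
    have : i = 0 := by omega
    subst this
    simpa using hab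

/-- `C.1` equals the component of any of its members. -/
lemma gvert_eq_comp {A : V → V → Prop} {ξ : V → W} {C : GVert A ξ} {a : V}
    (ha : a ∈ C.1) : C.1 = GammaComp A ξ a := by
  obtain ⟨v', hv'⟩ := C.2
  rw [hv'] at ha ⊢
  exact gammaComp_eq_of_mem ha

section Lift

variable (A : V → V → Prop) (ξ0 : V → W)

open Classical in
noncomputable def liftMap (ζ : V → W') : GVert A ξ0 → W' :=
  fun C => ζ (Classical.choose C.2)

lemma liftMap_mem {ζ : V → W'} (hc : ∀ v, GammaComp A ζ v = GammaComp A ξ0 v)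
    {C : GVert A ξ0} {a : V} (ha : a ∈ C.1) : liftMap A ξ0 ζ C = ζ a := by
  have hspec := Classical.choose_spec C.2
  set v' := Classical.choose C.2 with hv'
  have haa : a ∈ GammaComp A ξ0 v' := by rw [← hspec]; exact ha
  rw [← hc v'] at haa
  show ζ v' = ζ a
  exact (gammaComp_apply_eq haa).symm

lemma liftMap_pi {ζ : V → W'} (hc : ∀ v, GammaComp A ζ v = GammaComp A ξ0 v)
    (v : V) : liftMap A ξ0 ζ (piMap A ξ0 v) = ζ v :=
  liftMap_mem A ξ0 hc (mem_piMap ξ0 v)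

lemma liftMap_strict {B : W' → W' → Prop} {ζ : V → W'} (hζ : IsHom A B ζ)
    (hc : ∀ v, GammaComp A ζ v = GammaComp A ξ0 v) :
    IsStrictHom (GArc A ξ0) B (liftMap A ξ0 ζ) := by
  constructor
  · rintro C D ⟨a, ha, b, hb, hab⟩
    rw [liftMap_mem A ξ0 hc ha, liftMap_mem A ξ0 hc hb]
    exact hζ hab
  · rintro C D ⟨a, ha, b, hb, hab⟩ hCD heq
    rw [liftMap_mem A ξ0 hc ha, liftMap_mem A ξ0 hc hb] at heq
    have hbmem : b ∈ GammaComp A ζ a := connIn_step (Or.inl hab) heq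
    rw [hc a] at hbmem
    apply hCD
    apply Subtype.ext
    rw [gvert_eq_comp ha, gvert_eq_comp hb]
    exact gammaComp_eq_of_mem hbmem

lemma pi_comp_hom {B : W' → W' → Prop} {σ : GVert A ξ0 → W'}
    (hσ : IsHom (GArc A ξ0) B σ) : IsHom A B (fun v => σ (piMap A ξ0 v)) := by
  intro v w hvw
  exact hσ ⟨v, mem_piMap ξ0 v, w, mem_piMap ξ0 w, hvw⟩

lemma pi_step {B : W' → W' → Prop} {σ : GVert A ξ0 → W'}
    (hσ : IsStrictHom (GArc A ξ0) B σ) {a b : V} (hab : DAdj A a b)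
    (hz : σ (piMap A ξ0 a) = σ (piMap A ξ0 b)) : piMap A ξ0 a = piMap A ξ0 b := by
  by_contra hne
  rcases hab with h | h
  · exact hσ.2 ⟨a, mem_piMap ξ0 a, b, mem_piMap ξ0 b, h⟩ hne hz
  · exact hσ.2 ⟨b, mem_piMap ξ0 b, a, mem_piMap ξ0 a, h⟩ (fun e => hne e.symm) hz.symm

lemma pi_comp_comps {B : W' → W' → Prop} {σ : GVert A ξ0 → W'}
    (hσ : IsStrictHom (GArc A ξ0) B σ) (v : V) :
    GammaComp A (fun v => σ (piMap A ξ0 v)) v = GammaComp A ξ0 v := by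
  ext w
  constructor
  · rintro ⟨I, z, h0, hI, hm, hadj⟩
    have key : ∀ i ≤ I, piMap A ξ0 (z i) = piMap A ξ0 v := by
      intro i
      induction i with
      | zero => intro _; rw [h0]
      | succ n ih =>
        intro hn
        have h1 := ih (by omega)
        have h2 : σ (piMap A ξ0 (z n)) = σ (piMap A ξ0 (z (n + 1))) := by
          have e1 := hm n (by omega)
          have e2 := hm (n + 1) hn
          simp only [Set.mem_setOf_eq] at e1 e2
          rw [e1, e2]
        rw [← pi_step A ξ0 hσ (hadj n (by omega)) h2]
        exact h1
    have := key I le_rfl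
    rw [hI] at this
    exact piMap_eq_iff.mp this.symm
  · rintro ⟨I, z, h0, hI, hm, hadj⟩
    refine ⟨I, z, h0, hI, ?_, hadj⟩
    intro i hi
    have hz : z i ∈ GammaComp A ξ0 v :=
      ⟨i, z, h0, rfl, fun j hj => hm j (hj.trans hi), fun j hj => hadj j (lt_of_lt_of_le hj hi)⟩
    have : piMap A ξ0 v = piMap A ξ0 (z i) := piMap_eq_iff.mpr hz
    show σ (piMap A ξ0 (z i)) = σ (piMap A ξ0 v)
    rw [this]

/-- The fiber of homomorphisms with prescribed components equals the
strict homomorphisms from the quotient digraph. -/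
noncomputable def fiberEquiv (B : W' → W' → Prop) :
    {ζ : V → W' // IsHom A B ζ ∧ ∀ v, GammaComp A ζ v = GammaComp A ξ0 v} ≃
      StrictHomSet (GArc A ξ0) B where
  toFun := fun ζ => ⟨liftMap A ξ0 ζ.1, liftMap_strict A ξ0 ζ.2.1 ζ.2.2⟩
  invFun := fun σ => ⟨fun v => σ.1 (piMap A ξ0 v), pi_comp_hom A ξ0 σ.2.1,
    pi_comp_comps A ξ0 σ.2⟩
  left_inv := by
    rintro ⟨ζ, hζ, hc⟩
    apply Subtype.ext
    funext v
    exact liftMap_pi A ξ0 hc v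
  right_inv := by
    rintro ⟨σ, hσ⟩
    apply Subtype.ext
    funext C
    show liftMap A ξ0 (fun v => σ (piMap A ξ0 v)) C = σ C
    unfold liftMap
    have hspec := Classical.choose_spec C.2
    show σ (piMap A ξ0 (Classical.choose C.2)) = σ C
    congr 1
    apply Subtype.ext
    exact hspec.symm

end Lift

end AuxProof

/-- If `#S(G,R) ≤ #S(G,S)` for every finite digraph `G`, then
`#H(G,R) ≤ #H(G,S)` for every finite digraph `G`. -/


theorem stmt12 {VR VS : Type} [Finite VR] [Nonempty VR] [Finite VS] [Nonempty VS]
    (R : VR → VR → Prop) (S : VS → VS → Prop)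
    (h : ∀ (V : Type) [Finite V] [Nonempty V] (A : V → V → Prop),
      Nat.card (StrictHomSet A R) ≤ Nat.card (StrictHomSet A S)) :
    ∀ (V : Type) [Finite V] [Nonempty V] (A : V → V → Prop),
      Nat.card (HomSet A R) ≤ Nat.card (HomSet A S) := by
  intro V _ _ A
  classical
  have hfin : Finite (Set V) := inferInstance
  haveI : Finite (HomSet A R) := Subtype.finite
  haveI : Finite (HomSet A S) := Subtype.finite
  set F : HomSet A R → (V → Set V) := fun ξ v => GammaComp A ξ.1 v with hF
  set G : HomSet A S → (V → Set V) := fun ζ v => GammaComp A ζ.1 v with hG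
  -- fiberwise embeddings
  have fib : ∀ p : V → Set V,
      Nonempty ({ξ // F ξ = p} ↪ {ζ // G ζ = p}) := by
    intro p
    by_cases hne : Nonempty {ξ // F ξ = p}
    · obtain ⟨ξ0, hξ0⟩ := hne
      have e1 : {ξ // F ξ = p} ≃
          {ζ : V → VR // IsHom A R ζ ∧ ∀ v, GammaComp A ζ v = GammaComp A ξ0.1 v} :=
        { toFun := fun ξ => ⟨ξ.1.1, ξ.1.2, fun v => by
            have := congrFun ξ.2 v
            have h2 := congrFun hξ0 v
            simp only [hF] at this h2
            rw [this, ← h2]⟩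
          invFun := fun ζ => ⟨⟨ζ.1, ζ.2.1⟩, funext fun v => by
            have h2 := congrFun hξ0 v
            simp only [hF] at h2 ⊢
            rw [ζ.2.2 v, ← h2]⟩
          left_inv := fun ξ => by apply Subtype.ext; apply Subtype.ext; rfl
          right_inv := fun ζ => by apply Subtype.ext; rfl }
      have e2 : {ζ // G ζ = p} ≃
          {ζ : V → VS // IsHom A S ζ ∧ ∀ v, GammaComp A ζ v = GammaComp A ξ0.1 v} :=
        { toFun := fun ζ => ⟨ζ.1.1, ζ.1.2, fun v => by
            have := congrFun ζ.2 v
            have h2 := congrFun hξ0 v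
            simp only [hG] at this
            simp only [hF] at h2
            rw [this, ← h2]⟩
          invFun := fun ζ => ⟨⟨ζ.1, ζ.2.1⟩, funext fun v => by
            have h2 := congrFun hξ0 v
            simp only [hF] at h2
            simp only [hG]
            rw [ζ.2.2 v, ← h2]⟩
          left_inv := fun ζ => by apply Subtype.ext; apply Subtype.ext; rfl
          right_inv := fun ζ => by apply Subtype.ext; rfl }
      have eR := e1.trans (fiberEquiv A ξ0.1 R)
      have eS := e2.trans (fiberEquiv A ξ0.1 S)
      haveI : Finite (GVert A ξ0.1) := Subtype.finite
      haveI : Nonempty (GVert A ξ0.1) := ⟨piMap A ξ0.1 (Classical.arbitrary V)⟩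
      have hcard : Nat.card {ξ // F ξ = p} ≤ Nat.card {ζ // G ζ = p} := by
        rw [Nat.card_congr eR, Nat.card_congr eS]
        exact h (GVert A ξ0.1) (GArc A ξ0.1)
      haveI := Fintype.ofFinite {ξ // F ξ = p}
      haveI := Fintype.ofFinite {ζ // G ζ = p}
      rw [Nat.card_eq_fintype_card, Nat.card_eq_fintype_card] at hcard
      exact Function.Embedding.nonempty_of_card_le hcard
    · exact ⟨⟨fun ξ => absurd ⟨ξ⟩ hne, fun ξ => absurd ⟨ξ⟩ hne⟩⟩
  have bigemb : HomSet A R ↪ HomSet A S :=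
    ((Equiv.sigmaFiberEquiv F).symm.toEmbedding.trans
      ((Function.Embedding.sigmaMap (Function.Embedding.refl _) (fun p => (fib p).some)).trans
        (Equiv.sigmaFiberEquiv G).toEmbedding))
  exact Nat.card_le_card_of_injective bigemb bigemb.injective
end

section
/- Let R and S be finite posets. If #S(P,R) ≤ #S(P,S) for every finite poset P, then #H(P,R) ≤ #H(P,S) for every finite poset P. -/
section Stmt13Aux

variable {V Z : Type}

/-- One-step relation on the quotient induced by `A`. -/
private def stepRel (A : V → V → Prop) (e : Setoid V) : Quotient e → Quotient e → Prop :=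
  fun x y => ∃ a b, A a b ∧ Quotient.mk e a = x ∧ Quotient.mk e b = y

/-- The quotient relation: reflexive-transitive closure of `stepRel`. -/
private def qrel (A : V → V → Prop) (e : Setoid V) : Quotient e → Quotient e → Prop :=
  Relation.ReflTransGen (stepRel A e)

private def fiberRel (A : V → V → Prop) (ξ : V → Z) (v w : V) : Prop :=
  ξ v = ξ w ∧ (A v w ∨ A w v)

private def homSetoid (A : V → V → Prop) (ξ : V → Z) : Setoid V :=
  ⟨Relation.EqvGen (fiberRel A ξ), Relation.EqvGen.is_equivalence _⟩

/-- "Good" setoids: antisymmetric quotient relation and classes generated by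
comparable pairs. -/
private def GoodS (A : V → V → Prop) (e : Setoid V) : Prop :=
  AntiSymmetric (qrel A e) ∧
    ∀ v w : V, e.r v w → Relation.EqvGen (fun a b => e.r a b ∧ (A a b ∨ A b a)) v w

private lemma fiber_const {A : V → V → Prop} {ξ : V → Z} {v w : V}
    (h : Relation.EqvGen (fiberRel A ξ) v w) : ξ v = ξ w := by
  induction h with
  | rel _ _ h => exact h.1
  | refl => rfl
  | symm _ _ _ ih => exact ih.symm
  | trans _ _ _ _ _ ih1 ih2 => exact ih1.trans ih2

private def qlift (A : V → V → Prop) (ξ : V → Z) : Quotient (homSetoid A ξ) → Z :=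
  Quotient.lift ξ (fun _ _ h => fiber_const h)

private lemma qrel_mk {A : V → V → Prop} {e : Setoid V} {a b : V} (h : A a b) :
    qrel A e (Quotient.mk e a) (Quotient.mk e b) :=
  Relation.ReflTransGen.single ⟨a, b, h, rfl, rfl⟩

private lemma qlift_mono {A : V → V → Prop} {B : Z → Z → Prop} {ξ : V → Z}
    (hB : IsPosetRel B) (hξ : IsHom A B ξ) {x y : Quotient (homSetoid A ξ)}
    (h : qrel A (homSetoid A ξ) x y) : B (qlift A ξ x) (qlift A ξ y) := by
  induction h with
  | refl => exact hB.1 _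
  | tail _ step ih =>
      obtain ⟨a, b, hab, ha, hb⟩ := step
      subst ha; subst hb
      exact hB.2.2 ih (hξ hab)

private lemma qlift_strict_aux {A : V → V → Prop} {B : Z → Z → Prop} {ξ : V → Z}
    (hB : IsPosetRel B) (hξ : IsHom A B ξ) :
    ∀ {x y : Quotient (homSetoid A ξ)}, qrel A (homSetoid A ξ) x y →
      qlift A ξ x = qlift A ξ y → x = y := by
  intro x y h
  induction h using Relation.ReflTransGen.head_induction_on with
  | refl => intro _; rfl
  | head step rest ih =>
      intro hxy
      obtain ⟨a, b, hab, ha, hb⟩ := step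
      have h1 : B (qlift A ξ (Quotient.mk _ a)) (qlift A ξ (Quotient.mk _ b)) := hξ hab
      rw [ha, hb] at h1
      have h2 := qlift_mono hB hξ rest
      have h3 : qlift A ξ _ = qlift A ξ _ := hB.2.1 h1 (hxy ▸ h2)
      have h4 := ih (h3 ▸ hxy)
      have hfib : fiberRel A ξ a b := by
        refine ⟨?_, Or.inl hab⟩
        have : qlift A ξ (Quotient.mk _ a) = qlift A ξ (Quotient.mk _ b) := by
          rw [ha, hb]; exact h3
        exact this
      have : Quotient.mk (homSetoid A ξ) a = Quotient.mk (homSetoid A ξ) b :=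
        Quotient.sound (Relation.EqvGen.rel a b hfib)
      rw [← ha, this, hb, h4]

private lemma good_homSetoid {A : V → V → Prop} {B : Z → Z → Prop} {ξ : V → Z}
    (hB : IsPosetRel B) (hξ : IsHom A B ξ) : GoodS A (homSetoid A ξ) := by
  constructor
  · intro x y h1 h2
    exact qlift_strict_aux hB hξ h1
      (hB.2.1 (qlift_mono hB hξ h1) (qlift_mono hB hξ h2))
  · intro v w hvw
    exact Relation.EqvGen.mono (r := fiberRel A ξ)
      (p := fun a b => (homSetoid A ξ).r a b ∧ (A a b ∨ A b a))
      (fun a b hab => ⟨Relation.EqvGen.rel a b hab, hab.2⟩) _ _ hvw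

/-- The factorization map `H(G,B) → Σ good setoids e, S(G/e, B)`. -/
private def PhiMap (A : V → V → Prop) (B : Z → Z → Prop) (hB : IsPosetRel B)
    (ξ : HomSet A B) :
    Σ e : {e : Setoid V // GoodS A e}, StrictHomSet (qrel A e.1) B :=
  ⟨⟨homSetoid A ξ.1, good_homSetoid hB ξ.2⟩,
    ⟨qlift A ξ.1,
      ⟨fun _ _ h => qlift_mono hB ξ.2 h,
        fun _ _ h hne heq => hne (qlift_strict_aux hB ξ.2 h heq)⟩⟩⟩

private lemma PhiMap_inj (A : V → V → Prop) (B : Z → Z → Prop) (hB : IsPosetRel B) :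
    Function.Injective (PhiMap A B hB) := by
  intro ξ1 ξ2 hEq
  have : (fun p : Σ e : {e : Setoid V // GoodS A e}, StrictHomSet (qrel A e.1) B =>
      (fun v => p.2.1 (Quotient.mk p.1.1 v))) (PhiMap A B hB ξ1) =
      (fun p : Σ e : {e : Setoid V // GoodS A e}, StrictHomSet (qrel A e.1) B =>
      (fun v => p.2.1 (Quotient.mk p.1.1 v))) (PhiMap A B hB ξ2) := by rw [hEq]
  exact Subtype.ext this

/-- The composition map `Σ good setoids e, S(G/e, B) → H(G,B)`. -/
private def PsiMap (A : V → V → Prop) (B : Z → Z → Prop)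
    (p : Σ e : {e : Setoid V // GoodS A e}, StrictHomSet (qrel A e.1) B) :
    HomSet A B :=
  ⟨fun v => p.2.1 (Quotient.mk p.1.1 v), fun _ _ hab => p.2.2.1 (qrel_mk hab)⟩

private lemma comp_dir {A : V → V → Prop} {B : Z → Z → Prop} {e : Setoid V}
    {ζ : Quotient e → Z} (hζ : IsStrictHom (qrel A e) B ζ) {v w : V}
    (hvw : Relation.EqvGen (fiberRel A (fun v => ζ (Quotient.mk e v))) v w) :
    e.r v w := by
  induction hvw with
  | rel a b hab =>
      obtain ⟨heq, hadj⟩ := hab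
      have hmk : Quotient.mk e a = Quotient.mk e b := by
        rcases hadj with h' | h'
        · by_contra hne
          exact hζ.2 (qrel_mk h') hne heq
        · by_contra hne
          exact hζ.2 (qrel_mk h') (fun hh => hne hh.symm) heq.symm
      exact Quotient.exact hmk
  | refl a => exact e.iseqv.refl a
  | symm _ _ _ ih => exact e.iseqv.symm ih
  | trans _ _ _ _ _ ih1 ih2 => exact e.iseqv.trans ih1 ih2

private lemma homSetoid_comp {A : V → V → Prop} {B : Z → Z → Prop} {e : Setoid V}
    (he : GoodS A e) {ζ : Quotient e → Z} (hζ : IsStrictHom (qrel A e) B ζ) :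
    homSetoid A (fun v => ζ (Quotient.mk e v)) = e := by
  apply Setoid.ext
  intro v w
  constructor
  · intro hvw
    exact comp_dir hζ hvw
  · intro hvw
    exact Relation.EqvGen.mono (r := fun a b => e.r a b ∧ (A a b ∨ A b a))
      (p := fiberRel A (fun v => ζ (Quotient.mk e v)))
      (fun a b hab => ⟨congrArg ζ (Quotient.sound hab.1), hab.2⟩) _ _ (he.2 v w hvw)

private lemma PsiMap_inj (A : V → V → Prop) (B : Z → Z → Prop) :
    Function.Injective (PsiMap A B) := by
  rintro ⟨⟨e1, he1⟩, ζ1, hζ1⟩ ⟨⟨e2, he2⟩, ζ2, hζ2⟩ hEq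
  have hval : (fun v => ζ1 (Quotient.mk e1 v)) = fun v => ζ2 (Quotient.mk e2 v) :=
    congrArg Subtype.val hEq
  have hE : e1 = e2 := by
    rw [← homSetoid_comp he1 hζ1, ← homSetoid_comp he2 hζ2]
    exact congrArg (homSetoid A) hval
  subst hE
  have hfun : ζ1 = ζ2 := funext (Quotient.ind fun v => congrFun hval v)
  subst hfun
  rfl

private instance [Finite V] : Finite (Setoid V) :=
  Finite.of_injective (fun s : Setoid V => s.r) (by
    rintro ⟨r1, h1⟩ ⟨r2, h2⟩ hh
    obtain rfl : r1 = r2 := hh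
    rfl)

private instance {V W : Type} [Finite V] [Finite W] (A : V → V → Prop)
    (B : W → W → Prop) : Finite (StrictHomSet A B) :=
  inferInstanceAs (Finite {f : V → W // IsStrictHom A B f})

private instance {V W : Type} [Finite V] [Finite W] (A : V → V → Prop)
    (B : W → W → Prop) : Finite (HomSet A B) :=
  inferInstanceAs (Finite {f : V → W // IsHom A B f})

end Stmt13Aux

/-- For finite posets `R`, `S`: if `#S(P,R) ≤ #S(P,S)` for every finite poset
`P`, then `#H(P,R) ≤ #H(P,S)` for every finite poset `P`. -/
theorem stmt13 {VR VS : Type} [Finite VR] [Nonempty VR] [Finite VS] [Nonempty VS]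
    (R : VR → VR → Prop) (S : VS → VS → Prop)
    (hR : IsPosetRel R) (hS : IsPosetRel S)
    (h : ∀ (V : Type) [Finite V] [Nonempty V] (A : V → V → Prop), IsPosetRel A →
      Nat.card (StrictHomSet A R) ≤ Nat.card (StrictHomSet A S)) :
    ∀ (V : Type) [Finite V] [Nonempty V] (A : V → V → Prop), IsPosetRel A →
      Nat.card (HomSet A R) ≤ Nat.card (HomSet A S) := by
  intro V _ _ A hA
  classical
  have key : ∀ e : {e : Setoid V // GoodS A e},
      Nonempty (StrictHomSet (qrel A e.1) R ↪ StrictHomSet (qrel A e.1) S) := by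
    rintro ⟨e, he⟩
    haveI : Finite (Quotient e) := Quotient.finite e
    haveI : Nonempty (Quotient e) := Nonempty.map (Quotient.mk e) ‹Nonempty V›
    have hpos : IsPosetRel (qrel A e) :=
      ⟨fun _ => Relation.ReflTransGen.refl, he.1,
        fun _ _ _ h1 h2 => Relation.ReflTransGen.trans h1 h2⟩
    have hle := h (Quotient e) (qrel A e) hpos
    haveI := Fintype.ofFinite (StrictHomSet (qrel A e) R)
    haveI := Fintype.ofFinite (StrictHomSet (qrel A e) S)
    rw [Nat.card_eq_fintype_card, Nat.card_eq_fintype_card] at hle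
    exact Function.Embedding.nonempty_of_card_le hle
  have emb2 : (Σ e : {e : Setoid V // GoodS A e}, StrictHomSet (qrel A e.1) R) ↪
      (Σ e : {e : Setoid V // GoodS A e}, StrictHomSet (qrel A e.1) S) :=
    Function.Embedding.sigmaMap (Function.Embedding.refl _) (fun e => (key e).some)
  calc Nat.card (HomSet A R)
      ≤ Nat.card (Σ e : {e : Setoid V // GoodS A e}, StrictHomSet (qrel A e.1) R) :=
        Nat.card_le_card_of_injective _ (PhiMap_inj A R hR)
    _ ≤ Nat.card (Σ e : {e : Setoid V // GoodS A e}, StrictHomSet (qrel A e.1) S) :=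
        Nat.card_le_card_of_injective emb2 emb2.injective
    _ ≤ Nat.card (HomSet A S) :=
        Nat.card_le_card_of_injective _ (PsiMap_inj A S)
end

section
/- Assume the rearrangement setup and additionally that X is convex in R and that there is no walk in R starting in M and ending in Y, and none starting in Y and ending in M. Let z₀,…,z_I be a walk in S and K ≡ {i ∈ {1,…,I} : z_{i-1}z_i ∉ A_r}. Then #K ≤ 2, and if K = {k, ℓ} with k < ℓ, then there exist m, n ∈ M and x, y ∈ X with mx and yn proper arcs of R, z_{k-1}z_k = mβ(x) ∈ A_d, and z_{ℓ-1}z_ℓ = β(y)n ∈ A_u. -/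
/-- Under the rearrangement setup, with `X` convex in `R` and no walk in `R`
from `M` to `Y` or from `Y` to `M`: for every walk `z₀,…,z_I` in `S`, the set
`K = {i : z_{i-1}z_i ∉ A_r}` has at most two elements, and if `K = {k,ℓ}` with
`k < ℓ`, then there are `m, n ∈ M`, `x, y ∈ X` with `mx`, `yn` proper arcs of
`R`, `z_{k-1}z_k = mβ(x) ∈ A_d` and `z_{ℓ-1}z_ℓ = β(y)n ∈ A_u`. -/
theorem stmt17 {Z : Type} [Finite Z] [Nonempty Z]
    (A : Z → Z → Prop) (X M Y : Set Z) (β : Z → Z)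
    (hXM : X ∩ M = ∅) (hMY : M ∩ Y = ∅)
    (hMNY : ∀ y ∈ Y, M ∩ Nbr A y = ∅)
    (hβ : Set.MapsTo β X Y)
    (hconv : ∀ (z : ℕ → Z) (I : ℕ), (∀ i < I, A (z i) (z (i + 1))) →
      z 0 ∈ X → z I ∈ X → ∀ i ≤ I, z i ∈ X)
    (hMYwalk : ¬ ∃ (z : ℕ → Z) (I : ℕ),
      (∀ i < I, A (z i) (z (i + 1))) ∧ z 0 ∈ M ∧ z I ∈ Y)
    (hYMwalk : ¬ ∃ (z : ℕ → Z) (I : ℕ),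
      (∀ i < I, A (z i) (z (i + 1))) ∧ z 0 ∈ Y ∧ z I ∈ M)
    (z : ℕ → Z) (I : ℕ) (hw : ∀ i < I, SRel A X M β (z i) (z (i + 1))) :
    {i : ℕ | 1 ≤ i ∧ i ≤ I ∧ ¬ ArRel A X M (z (i - 1)) (z i)}.ncard ≤ 2 ∧
    ∀ k ℓ : ℕ, k < ℓ →
      {i : ℕ | 1 ≤ i ∧ i ≤ I ∧ ¬ ArRel A X M (z (i - 1)) (z i)} = {k, ℓ} →
      ∃ m ∈ M, ∃ n ∈ M, ∃ x ∈ X, ∃ y ∈ X,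
        (A m x ∧ m ≠ x) ∧ (A y n ∧ y ≠ n) ∧
        z (k - 1) = m ∧ z k = β x ∧ AdRel A X M β (z (k - 1)) (z k) ∧
        z (ℓ - 1) = β y ∧ z ℓ = n ∧ AuRel A X M β (z (ℓ - 1)) (z ℓ) := by
  classical
  have hXMmem : ∀ a, a ∈ X → a ∈ M → False := fun a hx hm =>
    Set.eq_empty_iff_forall_notMem.mp hXM a ⟨hx, hm⟩
  have hMYmem : ∀ a, a ∈ M → a ∈ Y → False := fun a hm hy =>
    Set.eq_empty_iff_forall_notMem.mp hMY a ⟨hm, hy⟩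
  set K := {i : ℕ | 1 ≤ i ∧ i ≤ I ∧ ¬ ArRel A X M (z (i - 1)) (z i)} with hKdef
  have hKmem : ∀ i, i ∈ K ↔ 1 ≤ i ∧ i ≤ I ∧ ¬ ArRel A X M (z (i - 1)) (z i) := by
    intro i; rw [hKdef]; rfl
  have hstep : ∀ i ∈ K, AdRel A X M β (z (i-1)) (z i) ∨ AuRel A X M β (z (i-1)) (z i) := by
    intro i hi
    obtain ⟨h1, h2, h3⟩ := (hKmem i).mp hi
    have h := hw (i-1) (by omega)
    rw [show i - 1 + 1 = i by omega] at h
    rcases h with h | h | h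
    · exact absurd h h3
    · exact Or.inl h
    · exact Or.inr h
  have hnotboth : ∀ v w, AdRel A X M β v w → AuRel A X M β v w → False := by
    rintro v w ⟨-, x, hxX, -, rfl⟩ ⟨hM, -⟩
    exact hMYmem _ hM (hβ hxX)
  have hsegA : ∀ k ℓ : ℕ, 1 ≤ k → ℓ ≤ I → (∀ j, k < j → j ≤ ℓ → j ∉ K) →
      ∀ j, k < j → j ≤ ℓ → A (z (j-1)) (z j) := by
    intro k ℓ hk hℓ hpure j hj1 hj2
    have hjK := hpure j hj1 hj2
    have h : ArRel A X M (z (j-1)) (z j) := by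
      by_contra h
      exact hjK ((hKmem j).mpr ⟨by omega, by omega, h⟩)
    exact h.1
  have hwalkYM : ∀ k ℓ : ℕ, k ≤ ℓ → (∀ j, k < j → j ≤ ℓ → A (z (j-1)) (z j)) →
      z k ∈ Y → z ℓ ∈ M → False := by
    intro k ℓ hkl harc hY hM
    apply hYMwalk
    refine ⟨fun i => z (k+i), ℓ - k, ?_, hY, ?_⟩
    · intro i hi
      have h := harc (k+i+1) (by omega) (by omega)
      rw [show k+i+1-1 = k+i by omega] at h
      exact h
    · show z (k + (ℓ - k)) ∈ M
      rw [show k + (ℓ-k) = ℓ by omega]; exact hM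
  have hwalkMY : ∀ k ℓ : ℕ, k ≤ ℓ → (∀ j, k < j → j ≤ ℓ → A (z (j-1)) (z j)) →
      z k ∈ M → z ℓ ∈ Y → False := by
    intro k ℓ hkl harc hM hY
    apply hMYwalk
    refine ⟨fun i => z (k+i), ℓ - k, ?_, hM, ?_⟩
    · intro i hi
      have h := harc (k+i+1) (by omega) (by omega)
      rw [show k+i+1-1 = k+i by omega] at h
      exact h
    · show z (k + (ℓ - k)) ∈ Y
      rw [show k + (ℓ-k) = ℓ by omega]; exact hY
  have hconv' : ∀ k ℓ : ℕ, k < ℓ → (∀ j, k < j → j < ℓ → A (z (j-1)) (z j)) →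
      ∀ y ∈ X, ∀ x ∈ X, A y (z k) → A (z (ℓ-1)) x → z k ∈ M → False := by
    intro k ℓ hkl harc y hy x hx hA1 hA2 hM
    set w : ℕ → Z := fun i => if i = 0 then y else if i ≤ ℓ - k then z (k + i - 1) else x
      with hwdef
    have hw0 : w 0 = y := by simp [hwdef]
    have hw1 : w 1 = z k := by
      simp only [hwdef]
      rw [if_neg one_ne_zero, if_pos (by omega)]
      congr 1
    have hwlast : w (ℓ - k + 1) = x := by
      simp only [hwdef]
      rw [if_neg (by omega), if_neg (by omega)]
    have harcs : ∀ i < ℓ - k + 1, A (w i) (w (i+1)) := by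
      intro i hi
      rcases Nat.eq_zero_or_pos i with h0 | h0
      · subst h0
        rw [hw0, hw1]
        exact hA1
      · by_cases he : i = ℓ - k
        · subst he
          rw [hwlast]
          have hwi : w (ℓ - k) = z (ℓ - 1) := by
            simp only [hwdef]
            rw [if_neg (by omega), if_pos le_rfl, show k + (ℓ-k) - 1 = ℓ - 1 by omega]
          rw [hwi]
          exact hA2
        · have hi' : i < ℓ - k := by omega
          have hwi : w i = z (k + i - 1) := by
            simp only [hwdef]
            rw [if_neg (by omega), if_pos (by omega)]
          have hwi1 : w (i+1) = z (k + i) := by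
            simp only [hwdef]
            rw [if_neg (by omega), if_pos (by omega), show k + (i+1) - 1 = k + i by omega]
          rw [hwi, hwi1]
          have h := harc (k+i) (by omega) (by omega)
          rw [show k+i-1 = k + i - 1 from rfl] at h
          exact h
    have hmem := hconv w (ℓ - k + 1) harcs (by rw [hw0]; exact hy)
      (by rw [hwlast]; exact hx) 1 (by omega)
    rw [hw1] at hmem
    exact hXMmem _ hmem hM
  have keyDU : ∀ k ∈ K, ∀ ℓ ∈ K, k < ℓ → (∀ j, k < j → j < ℓ → j ∉ K) →
      AdRel A X M β (z (k-1)) (z k) ∧ AuRel A X M β (z (ℓ-1)) (z ℓ) := by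
    intro k hk ℓ hℓ hkl hpure
    obtain ⟨hk1, hkI, -⟩ := (hKmem k).mp hk
    obtain ⟨hl1, hlI, -⟩ := (hKmem ℓ).mp hℓ
    have harc : ∀ j, k < j → j < ℓ → A (z (j-1)) (z j) := by
      intro j h1 h2
      exact hsegA k (ℓ-1) hk1 (by omega) (fun j h1 h2 => hpure j h1 (by omega)) j h1 (by omega)
    have harc' : ∀ j, k < j → j ≤ ℓ - 1 → A (z (j-1)) (z j) :=
      fun j h1 h2 => harc j h1 (by omega)
    rcases hstep k hk with hdk | huk
    · rcases hstep ℓ hℓ with hdl | hul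
      · exfalso
        obtain ⟨-, x, hxX, -, hzk⟩ := hdk
        exact hwalkYM k (ℓ-1) (by omega) harc' (by rw [hzk]; exact hβ hxX) hdl.1
      · exact ⟨hdk, hul⟩
    · exfalso
      obtain ⟨hzkM, y, hyX, hAyk, -⟩ := huk
      rcases hstep ℓ hℓ with hdl | hul
      · obtain ⟨-, x, hxX, hAlx, -⟩ := hdl
        exact hconv' k ℓ hkl harc y hyX x hxX hAyk hAlx hzkM
      · obtain ⟨-, y', hy'X, -, hzl⟩ := hul
        exact hwalkMY k (ℓ-1) (by omega) harc' hzkM (by rw [hzl]; exact hβ hy'X)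
  have next : ∀ k ∈ K, ∀ ℓ ∈ K, k < ℓ → ∃ ℓ' ∈ K, k < ℓ' ∧
      (∀ j, k < j → j < ℓ' → j ∉ K) ∧ ℓ' ≤ ℓ := by
    intro k hk ℓ hℓ hkl
    have hex : ∃ n, n ∈ K ∧ k < n := ⟨ℓ, hℓ, hkl⟩
    refine ⟨Nat.find hex, (Nat.find_spec hex).1, (Nat.find_spec hex).2, ?_,
      Nat.find_min' hex ⟨hℓ, hkl⟩⟩
    intro j h1 h2 hjK
    exact Nat.find_min hex h2 ⟨hjK, h1⟩
  have keyU : ∀ k ∈ K, AuRel A X M β (z (k-1)) (z k) → ∀ ℓ ∈ K, ¬ k < ℓ := by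
    intro k hk hu ℓ hℓ hkl
    obtain ⟨ℓ', hℓ'K, hkl', hpure, -⟩ := next k hk ℓ hℓ hkl
    exact hnotboth _ _ (keyDU k hk ℓ' hℓ'K hkl' hpure).1 hu
  have keyD : ∀ k ∈ K, AdRel A X M β (z (k-1)) (z k) → ∀ ℓ ∈ K, k < ℓ →
      AuRel A X M β (z (ℓ-1)) (z ℓ) := by
    intro k hk hd ℓ hℓ hkl
    obtain ⟨ℓ', hℓ'K, hkl', hpure, hle⟩ := next k hk ℓ hℓ hkl
    have hu' := (keyDU k hk ℓ' hℓ'K hkl' hpure).2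
    rcases eq_or_lt_of_le hle with he | hlt
    · rw [← he]; exact hu'
    · exact absurd hlt (keyU ℓ' hℓ'K hu' ℓ hℓ)
  have three : ∀ a ∈ K, ∀ b ∈ K, ∀ c ∈ K, a < b → b < c → False := by
    intro a ha b hb c hc hab hbc
    rcases hstep a ha with hd | hu
    · exact keyU b hb (keyD a ha hd b hb hab) c hc hbc
    · exact keyU a ha hu b hb hab
  constructor
  · by_contra hcard
    push_neg at hcard
    have hKfin : K.Finite :=
      Set.Finite.subset (Set.finite_Icc 1 I) (fun i hi => by
        obtain ⟨h1, h2, -⟩ := (hKmem i).mp hi; exact ⟨h1, h2⟩)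
    obtain ⟨a, ha, b, hb, c, hc, hab, hac, hbc⟩ := (Set.two_lt_ncard hKfin).mp hcard
    rcases lt_trichotomy a b with h1 | h1 | h1
    · rcases lt_trichotomy b c with h2 | h2 | h2
      · exact three a ha b hb c hc h1 h2
      · exact hbc h2
      · rcases lt_trichotomy a c with h3 | h3 | h3
        · exact three a ha c hc b hb h3 h2
        · exact hac h3
        · exact three c hc a ha b hb h3 h1
    · exact hab h1
    · rcases lt_trichotomy a c with h3 | h3 | h3
      · exact three b hb a ha c hc h1 h3
      · exact hac h3
      · rcases lt_trichotomy b c with h2 | h2 | h2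
        · exact three b hb c hc a ha h2 h3
        · exact hbc h2
        · exact three c hc b hb a ha h2 h1
  · intro k ℓ hkl hKeq
    have hkK : k ∈ K := by rw [hKeq]; left; rfl
    have hℓK : ℓ ∈ K := by rw [hKeq]; right; rfl
    have hpure : ∀ j, k < j → j < ℓ → j ∉ K := by
      intro j h1 h2 hj
      rw [hKeq] at hj
      simp only [Set.mem_insert_iff, Set.mem_singleton_iff] at hj
      omega
    have hd : AdRel A X M β (z (k-1)) (z k) := (keyDU k hkK ℓ hℓK hkl hpure).1
    have hu : AuRel A X M β (z (ℓ-1)) (z ℓ) := (keyDU k hkK ℓ hℓK hkl hpure).2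
    obtain ⟨hmM, x, hxX, hAmx, hzk⟩ := hd
    obtain ⟨hnM, y, hyX, hAyn, hzl⟩ := hu
    refine ⟨z (k-1), hmM, z ℓ, hnM, x, hxX, y, hyX, ⟨hAmx, ?_⟩, ⟨hAyn, ?_⟩,
      rfl, hzk, ⟨hmM, x, hxX, hAmx, hzk⟩, hzl, rfl, ⟨hnM, y, hyX, hAyn, hzl⟩⟩
    · intro he
      exact hXMmem x hxX (he ▸ hmM)
    · intro he
      apply hXMmem y hyX
      rw [he]
      exact hnM
end

section
/- Assume the rearrangement setup and additionally that X is convex in R and that there is no walk in R starting in M and ending in Y, and none starting in Y and ending in M. If R ∈ T_a, then S ∈ T_a. -/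
/-- Under the rearrangement setup, with `X` convex in `R` and no walk in `R`
from `M` to `Y` or from `Y` to `M`: if `R ∈ T_a`, then `S ∈ T_a`. -/
theorem stmt18 {Z : Type} [Finite Z] [Nonempty Z]
    (A : Z → Z → Prop) (X M Y : Set Z) (β : Z → Z)
    (hXM : X ∩ M = ∅) (hMY : M ∩ Y = ∅)
    (hMNY : ∀ y ∈ Y, M ∩ Nbr A y = ∅)
    (hβ : Set.MapsTo β X Y)
    (hconv : ∀ (z : ℕ → Z) (I : ℕ), (∀ i < I, A (z i) (z (i + 1))) →
      z 0 ∈ X → z I ∈ X → ∀ i ≤ I, z i ∈ X)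
    (hMYwalk : ¬ ∃ (z : ℕ → Z) (I : ℕ),
      (∀ i < I, A (z i) (z (i + 1))) ∧ z 0 ∈ M ∧ z I ∈ Y)
    (hYMwalk : ¬ ∃ (z : ℕ → Z) (I : ℕ),
      (∀ i < I, A (z i) (z (i + 1))) ∧ z 0 ∈ Y ∧ z I ∈ M)
    (hTa : Ta A) :
    Ta (SRel A X M β) := by
    classical
  intro z I hI harcs hcl
  -- periodic extension
  set zz : ℕ → Z := fun i => z (i % I) with hzzdef
  have hmod : ∀ i : ℕ, i % I < I := fun i => Nat.mod_lt i hI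
  have hz1 : ∀ i : ℕ, zz (i + 1) = z (i % I + 1) := by
    intro i
    show z ((i + 1) % I) = z (i % I + 1)
    rcases Nat.lt_or_ge (i % I + 1) I with h | h
    · rw [← Nat.mod_add_mod, Nat.mod_eq_of_lt h]
    · have he : i % I + 1 = I := by have := hmod i; omega
      have h0 : (i + 1) % I = 0 := by
        rw [← Nat.mod_add_mod, he, Nat.mod_self]
      rw [h0, he]; exact hcl
  have hP : ∀ i, SRel A X M β (zz i) (zz (i + 1)) := by
    intro i
    rw [hz1]
    exact (harcs _ (hmod i)).1
  have hrep : ∀ p, p < I → zz (p + I) = z p ∧ zz (p + I + 1) = z (p + 1) := by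
    intro p hp
    constructor
    · show z ((p + I) % I) = z p
      rw [Nat.add_mod_right, Nat.mod_eq_of_lt hp]
    · rw [hz1, Nat.add_mod_right, Nat.mod_eq_of_lt hp]
  -- an A_u arc is never an A_r arc
  have hAuAr : ∀ v w, AuRel A X M β v w → ¬ ArRel A X M v w := by
    rintro v w ⟨hwM, x, hxX, hAxw, rfl⟩ ⟨hA, -, -⟩
    have hvY : β x ∈ Y := hβ hxX
    have hne : w ≠ β x := by
      intro h
      have : β x ∈ M ∩ Y := ⟨h ▸ hwM, hvY⟩
      rw [hMY] at this; exact this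
    have : w ∈ M ∩ Nbr A (β x) := ⟨hwM, hne, Or.inl hA⟩
    rw [hMNY (β x) hvY] at this; exact this
  -- minimal non-A_r position after s
  have key : ∀ s : ℕ, (∃ d, ¬ ArRel A X M (zz (s + d)) (zz (s + d + 1))) →
      ∃ d, ¬ ArRel A X M (zz (s + d)) (zz (s + d + 1)) ∧
        ∀ e < d, ArRel A X M (zz (s + e)) (zz (s + e + 1)) := by
    intro s h
    exact ⟨Nat.find h, Nat.find_spec h, fun e he => not_not.mp (Nat.find_min h he)⟩
  by_cases hAu : ∃ j, j < I ∧ AuRel A X M β (z j) (z (j + 1))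
  · -- case b : some A_u arc
    obtain ⟨p, hp, hAup⟩ := hAu
    obtain ⟨hm1, xb, hxbX, hAxb, hzp⟩ := hAup
    have hzp1 : zz (p + 1) = z (p + 1) := by
      rw [hz1, Nat.mod_eq_of_lt hp]
    have hex : ∃ d, ¬ ArRel A X M (zz (p + 1 + d)) (zz (p + 1 + d + 1)) := by
      refine ⟨I - 1, ?_⟩
      have h1 : p + 1 + (I - 1) = p + I := by omega
      rw [h1, (hrep p hp).1, (hrep p hp).2]
      exact hAuAr _ _ ⟨hm1, xb, hxbX, hAxb, hzp⟩
    obtain ⟨d, hqnotAr, hmin⟩ := key (p + 1) hex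
    rcases hP (p + 1 + d) with h | h | h
    · exact hqnotAr h
    · -- A_d arc at q : convexity contradiction
      obtain ⟨hqM, x, hxX, hAqx, hbq⟩ := h
      set w : ℕ → Z := fun i => if i = 0 then xb else if i ≤ d + 1 then zz (p + i) else x
        with hwdef
      have hw0 : w 0 = xb := by simp [hwdef]
      have hwmid : ∀ i, 1 ≤ i → i ≤ d + 1 → w i = zz (p + i) := by
        intro i h1 h2
        simp only [hwdef]
        rw [if_neg (by omega), if_pos h2]
      have hwend : w (d + 2) = x := by
        simp only [hwdef]
        rw [if_neg (by omega), if_neg (by omega)]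
      have harcw : ∀ i < d + 2, A (w i) (w (i + 1)) := by
        intro i hi
        rcases Nat.eq_or_lt_of_le (Nat.zero_le i) with h0 | h0
        · rw [← h0, hw0, hwmid 1 le_rfl (by omega), hzp1]
          exact hAxb
        · rcases Nat.lt_or_ge i (d + 1) with hlt | hge
          · rw [hwmid i (by omega) (by omega), hwmid (i + 1) (by omega) (by omega)]
            have he := (hmin (i - 1) (by omega)).1
            have h1 : p + 1 + (i - 1) = p + i := by omega
            rw [h1] at he
            have h2 : p + i + 1 = p + (i + 1) := by omega
            rw [h2] at he
            exact he
          · have hieq : i = d + 1 := by omega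
            rw [hieq, hwmid (d + 1) (by omega) le_rfl]
            have h1 : p + (d + 1) = p + 1 + d := by omega
            have h2 : (d + 1) + 1 = d + 2 := rfl
            rw [h1, h2, hwend]
            exact hAqx
      have h1X : w 1 ∈ X := by
        refine hconv w (d + 2) harcw ?_ ?_ 1 (by omega)
        · rw [hw0]; exact hxbX
        · rw [hwend]; exact hxX
      rw [hwmid 1 le_rfl (by omega), hzp1] at h1X
      have : z (p + 1) ∈ X ∩ M := ⟨h1X, hm1⟩
      rw [hXM] at this; exact this
    · -- A_u arc at q : M → Y walk
      obtain ⟨hq1M, x', hx'X, hAx', hq⟩ := h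
      refine hMYwalk ⟨fun i => zz (p + 1 + i), d, ?_, ?_, ?_⟩
      · exact fun i hi => (hmin i hi).1
      · show zz (p + 1 + 0) ∈ M
        rw [show p + 1 + 0 = p + 1 from rfl, hzp1]
        exact hm1
      · show zz (p + 1 + d) ∈ Y
        rw [hq]
        exact hβ hx'X
  · -- no A_u arcs anywhere
    have hnoAu : ∀ i, ¬ AuRel A X M β (zz i) (zz (i + 1)) := by
      intro i h
      rw [hz1] at h
      exact hAu ⟨i % I, hmod i, h⟩
    by_cases hall : ∀ i, i < I → ArRel A X M (z i) (z (i + 1))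
    · exact hTa z I hI (fun i hi => ⟨(hall i hi).1, (harcs i hi).2⟩) hcl
    · push_neg at hall
      obtain ⟨p, hp, hnp⟩ := hall
      have hAd : AdRel A X M β (z p) (z (p + 1)) := by
        rcases (harcs p hp).1 with h | h | h
        · exact absurd h hnp
        · exact h
        · exact absurd h (fun h' => hAu ⟨p, hp, h'⟩)
      obtain ⟨hpM, x, hxX, hApx, hbp⟩ := hAd
      have hzp1 : zz (p + 1) = z (p + 1) := by
        rw [hz1, Nat.mod_eq_of_lt hp]
      have hex : ∃ d, ¬ ArRel A X M (zz (p + 1 + d)) (zz (p + 1 + d + 1)) := by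
        refine ⟨I - 1, ?_⟩
        have h1 : p + 1 + (I - 1) = p + I := by omega
        rw [h1, (hrep p hp).1, (hrep p hp).2]
        exact hnp
      obtain ⟨d, hqnotAr, hmin⟩ := key (p + 1) hex
      rcases hP (p + 1 + d) with h | h | h
      · exact hqnotAr h
      · -- A_d arc at q : Y → M walk
        refine hYMwalk ⟨fun i => zz (p + 1 + i), d, ?_, ?_, ?_⟩
        · exact fun i hi => (hmin i hi).1
        · show zz (p + 1 + 0) ∈ Y
          rw [show p + 1 + 0 = p + 1 from rfl, hzp1, hbp]
          exact hβ hxX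
        · exact h.1
      · exact hnoAu _ h
end
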